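/- Let m > 2 and n = 3. Then there exists a tuple u ∈ Z_m^3 with Ducci period exactly 6. -/

import Mathlib

def ducci {m : ℕ} (u : Fin 3 → ZMod m) : Fin 3 → ZMod m :=
  fun i => u i + u (i + 1)

lemma ducci_vec {m : ℕ} (a b c : ZMod m) :
    ducci ![a, b, c] = ![a + b, b + c, c + a] := by
  funext i
  fin_cases i <;> simp [ducci]

theorem exists_period_six (m : ℕ) (hm : 2 < m) :
    ∃ u : Fin 3 → ZMod m,
      sInf {β : ℕ | 0 < β ∧ ∃ α : ℕ, ducci^[α + β] u = ducci^[α] u} = 6 := by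
  haveI : NeZero m := ⟨by omega⟩
  have hone : (1 : ZMod m) ≠ 0 := by
    have h := (ZMod.natCast_eq_zero_iff 1 m).not.mpr
      (fun hd => by have := Nat.le_of_dvd one_pos hd; omega)
    simpa using h
  have htwo : (2 : ZMod m) ≠ 0 := by
    have h := (ZMod.natCast_eq_zero_iff 2 m).not.mpr
      (fun hd => by have := Nat.le_of_dvd two_pos hd; omega)
    simpa using h
  set u : Fin 3 → ZMod m := ![1, -1, 0] with hu
  refine ⟨u, ?_⟩
  have e1 : ducci u = ![0, -1, 1] := by
    rw [hu, ducci_vec]; norm_num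
  have e2 : ducci^[2] u = ![-1, 0, 1] := by
    have h : ducci^[2] u = ducci (ducci u) := rfl
    rw [h, e1, ducci_vec]; norm_num
  have e3 : ducci^[3] u = ![-1, 1, 0] := by
    have h : ducci^[3] u = ducci (ducci^[2] u) := rfl
    rw [h, e2, ducci_vec]; norm_num
  have e4 : ducci^[4] u = ![0, 1, -1] := by
    have h : ducci^[4] u = ducci (ducci^[3] u) := rfl
    rw [h, e3, ducci_vec]; norm_num
  have e5 : ducci^[5] u = ![1, 0, -1] := by
    have h : ducci^[5] u = ducci (ducci^[4] u) := rfl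
    rw [h, e4, ducci_vec]; norm_num
  have e6 : ducci^[6] u = u := by
    have h : ducci^[6] u = ducci (ducci^[5] u) := rfl
    rw [h, e5, ducci_vec, hu]; norm_num
  have e6k : ∀ k : ℕ, ducci^[6 * k] u = u := by
    intro k
    induction k with
    | zero => simp
    | succ n ih =>
      rw [Nat.mul_succ, Function.iterate_add_apply, e6, ih]
  set S : Set ℕ := {β : ℕ | 0 < β ∧ ∃ α : ℕ, ducci^[α + β] u = ducci^[α] u} with hS
  have h6S : 6 ∈ S := ⟨by norm_num, 0, by simpa using e6⟩
  have hle : sInf S ≤ 6 := Nat.sInf_le h6S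
  have hmem : sInf S ∈ S := Nat.sInf_mem ⟨6, h6S⟩
  obtain ⟨hpos, α, hα⟩ := hmem
  have key : ducci^[sInf S] u = u := by
    have h := congrArg (ducci^[5 * α + 6]) hα
    rw [← Function.iterate_add_apply, ← Function.iterate_add_apply] at h
    have l1 : 5 * α + 6 + (α + sInf S) = sInf S + 6 * (α + 1) := by ring
    have l2 : 5 * α + 6 + α = 6 * (α + 1) := by ring
    rw [l1, l2, e6k, Function.iterate_add_apply, e6k] at h
    exact h
  interval_cases h : sInf S
  · rw [Function.iterate_one, e1] at key
    have hc := congrFun key 0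
    simp only [hu, Matrix.cons_val_zero] at hc
    exact absurd hc.symm hone
  · rw [e2] at key
    have hc := congrFun key 0
    simp only [hu, Matrix.cons_val_zero] at hc
    exact absurd (by linear_combination -hc : (2 : ZMod m) = 0) htwo
  · rw [e3] at key
    have hc := congrFun key 1
    simp only [hu, Matrix.cons_val_one, Matrix.head_cons, Matrix.cons_val_zero] at hc
    exact absurd (by linear_combination hc : (2 : ZMod m) = 0) htwo
  · rw [e4] at key
    have hc := congrFun key 2
    simp only [hu] at hc
    have hc2 : ((![0, 1, -1] : Fin 3 → ZMod m) 2) = ((![1, -1, 0] : Fin 3 → ZMod m) 2) := hc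
    simp at hc2
    exact absurd hc2 hone
  · rw [e5] at key
    have hc := congrFun key 1
    simp only [hu, Matrix.cons_val_one, Matrix.head_cons, Matrix.cons_val_zero] at hc
    exact absurd (by linear_combination hc : (1 : ZMod m) = 0) hone
  · rfl
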